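/- The sequence of modified Bernoulli numbers of odd index, B*_{2n+1} = sum_{r=0}^{2n+1} C(2n+1+r, 2r) B_r/(2n+1+r), is periodic in n with period 6, taking the values 3/4, -1/4, -1/4, 1/4, 1/4, -3/4 for n ≡ 0,1,2,3,4,5 (mod 6). -/

import Mathlib

open Finset

/-- The modified Bernoulli numbers of Zagier. -/
noncomputable def zagierBstar (n : ℕ) : ℚ :=
  ∑ r ∈ Finset.range (n + 1), ((n + r).choose (2 * r) : ℚ) * bernoulli r / (n + r)

open Polynomial

def gcoef (n r : ℕ) : ℕ := (n + r).choose (2 * r) + (n + r - 1).choose (2 * r)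

noncomputable def gpoly (n : ℕ) : ℚ[X] :=
  ∑ r ∈ Finset.range (n + 1), Polynomial.monomial r (gcoef n r : ℚ)

lemma gcoef_eq_zero {n r : ℕ} (h : n < r) : gcoef n r = 0 := by
  unfold gcoef
  rw [Nat.choose_eq_zero_of_lt (by omega), Nat.choose_eq_zero_of_lt (by omega)]

lemma coeff_gpoly (n r : ℕ) : (gpoly n).coeff r = (gcoef n r : ℚ) := by
  rw [gpoly, finset_sum_coeff]
  simp only [coeff_monomial]
  rw [Finset.sum_ite_eq' (Finset.range (n+1)) r (fun b => (gcoef n b : ℚ))]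
  by_cases h : r ∈ Finset.range (n + 1)
  · simp [h]
  · simp only [h, if_false]
    rw [gcoef_eq_zero (by simp at h; omega)]
    simp

lemma gpoly_zero : gpoly 0 = Polynomial.C 2 := by
  have : gcoef 0 0 = 2 := by decide
  simp [gpoly, this, Polynomial.monomial_zero_left]

lemma gpoly_one : gpoly 1 = Polynomial.C 2 + Polynomial.X := by
  have h0 : gcoef 1 0 = 2 := by decide
  have h1 : gcoef 1 1 = 1 := by decide
  rw [gpoly, Finset.sum_range_succ, Finset.sum_range_one, h0, h1]
  simp [Polynomial.monomial_zero_left, Polynomial.monomial_one_one_eq_X]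

lemma gcoef_rec (n s : ℕ) :
    gcoef (n + 2) (s + 1) + gcoef n (s + 1) = 2 * gcoef (n + 1) (s + 1) + gcoef (n + 1) s := by
  unfold gcoef
  simp only [show n + 2 + (s + 1) = n + s + 3 by omega, show n + s + 3 - 1 = n + s + 2 by omega,
    show n + (s + 1) = n + s + 1 by omega, show n + s + 1 - 1 = n + s by omega,
    show n + 1 + (s + 1) = n + s + 2 by omega, show n + s + 2 - 1 = n + s + 1 by omega,
    show n + 1 + s = n + s + 1 by omega, show 2 * (s + 1) = 2 * s + 2 by omega]
  have h1 : (n+s+3).choose (2*s+2) = (n+s+2).choose (2*s+1) + (n+s+2).choose (2*s+2) :=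
    Nat.choose_succ_succ' (n+s+2) (2*s+1)
  have h2 : (n+s+2).choose (2*s+1) = (n+s+1).choose (2*s) + (n+s+1).choose (2*s+1) :=
    Nat.choose_succ_succ' (n+s+1) (2*s)
  have h3 : (n+s+1).choose (2*s+1) = (n+s).choose (2*s) + (n+s).choose (2*s+1) :=
    Nat.choose_succ_succ' (n+s) (2*s)
  have h4 : (n+s+1).choose (2*s+2) = (n+s).choose (2*s+1) + (n+s).choose (2*s+2) :=
    Nat.choose_succ_succ' (n+s) (2*s+1)
  have h5 : (n+s+2).choose (2*s+2) = (n+s+1).choose (2*s+1) + (n+s+1).choose (2*s+2) :=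
    Nat.choose_succ_succ' (n+s+1) (2*s+1)
  omega

lemma gpoly_rec (n : ℕ) :
    gpoly (n + 2) = (Polynomial.C 2 + Polynomial.X) * gpoly (n + 1) - gpoly n := by
  ext r
  rw [Polynomial.coeff_sub, add_mul, Polynomial.coeff_add, Polynomial.coeff_C_mul]
  rcases r with _ | s
  · rw [Polynomial.mul_coeff_zero, Polynomial.coeff_X_zero, zero_mul]
    rw [coeff_gpoly, coeff_gpoly, coeff_gpoly]
    have a1 : gcoef (n+2) 0 = 2 := by unfold gcoef; simp
    have a2 : gcoef (n+1) 0 = 2 := by unfold gcoef; simp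
    have a3 : gcoef n 0 = 2 := by unfold gcoef; simp
    rw [a1, a2, a3]; norm_num
  · rw [Polynomial.coeff_X_mul]
    rw [coeff_gpoly, coeff_gpoly, coeff_gpoly, coeff_gpoly]
    have h : ((gcoef (n + 2) (s + 1) : ℚ)) + gcoef n (s + 1)
        = 2 * gcoef (n + 1) (s + 1) + gcoef (n + 1) s := by exact_mod_cast gcoef_rec n s
    linarith

lemma C_neg_four : (Polynomial.C (-4) : ℚ[X]) = -(Polynomial.C 2) - Polynomial.C 2 := by
  rw [← Polynomial.C_neg, ← Polynomial.C_sub]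
  norm_num

lemma gpoly_reflect_aux : ∀ n : ℕ,
    (gpoly n).comp (Polynomial.C (-4) - Polynomial.X) = (-1 : ℚ[X]) ^ n * gpoly n ∧
    (gpoly (n+1)).comp (Polynomial.C (-4) - Polynomial.X) = (-1 : ℚ[X]) ^ (n+1) * gpoly (n+1) := by
  intro n
  induction n with
  | zero =>
    constructor
    · rw [gpoly_zero]; simp
    · rw [gpoly_one]
      rw [Polynomial.add_comp, Polynomial.C_comp, Polynomial.X_comp, C_neg_four]
      ring
  | succ k ih =>
    refine ⟨ih.2, ?_⟩
    rw [gpoly_rec k, Polynomial.sub_comp, Polynomial.mul_comp, Polynomial.add_comp,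
      Polynomial.C_comp, Polynomial.X_comp, ih.1, ih.2, C_neg_four]
    ring

lemma gpoly_reflect (n : ℕ) :
    (gpoly n).comp (Polynomial.C (-4) - Polynomial.X) = (-1 : ℚ[X]) ^ n * gpoly n :=
  (gpoly_reflect_aux n).1

noncomputable def MBf : ℕ → ℚ → ℚ := fun s a => a * _root_.bernoulli s

lemma MBf_zero (i : ℕ) : MBf i 0 = 0 := by simp [MBf]

/-- The Bernoulli umbral functional. -/
noncomputable def MB : ℚ[X] →+ ℚ where
  toFun p := p.sum MBf
  map_zero' := Polynomial.sum_zero_index MBf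
  map_add' p q := Polynomial.sum_add_index p q MBf MBf_zero (fun a b₁ b₂ => by simp [MBf]; ring)

lemma MB_apply (p : ℚ[X]) : MB p = p.sum MBf := rfl

lemma MB_monomial (s : ℕ) (a : ℚ) : MB (Polynomial.monomial s a) = a * _root_.bernoulli s := by
  rw [MB_apply, Polynomial.sum_monomial_index a MBf (MBf_zero s)]; rfl

lemma MB_C_mul (c : ℚ) (p : ℚ[X]) : MB (Polynomial.C c * p) = c * MB p := by
  rw [MB_apply, MB_apply, ← Polynomial.smul_eq_C_mul,
    Polynomial.sum_smul_index p c MBf MBf_zero]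
  rw [Polynomial.sum_def, Polynomial.sum_def, Finset.mul_sum]
  exact Finset.sum_congr rfl fun i _ => by simp [MBf]; ring

lemma MB_X_add_C_pow (s : ℕ) (y : ℚ) :
    MB ((Polynomial.X + Polynomial.C y) ^ s) = (Polynomial.bernoulli s).eval y := by
  rw [add_pow, map_sum, Polynomial.bernoulli, Polynomial.eval_finset_sum]
  refine Finset.sum_congr rfl fun k hk => ?_
  have e : Polynomial.X ^ k * Polynomial.C y ^ (s - k) * ((s.choose k : ℕ) : ℚ[X])
      = Polynomial.monomial k (y ^ (s - k) * (s.choose k : ℚ)) := by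
    rw [← Polynomial.C_mul_X_pow_eq_monomial, Polynomial.C_mul, Polynomial.C_pow,
      Polynomial.C_eq_natCast]
    ring
  rw [e, MB_monomial, Polynomial.eval_monomial]
  ring

lemma MB_gpoly (n : ℕ) :
    MB (gpoly n) = ∑ r ∈ Finset.range (n+1), (gcoef n r : ℚ) * _root_.bernoulli r := by
  rw [gpoly, map_sum]
  exact Finset.sum_congr rfl fun r _ => MB_monomial r _

lemma deriv_gpoly_eval (n : ℕ) (x : ℚ) :
    (gpoly n).derivative.eval x
      = ∑ r ∈ Finset.range (n+1), (gcoef n r : ℚ) * r * x ^ (r-1) := by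
  rw [gpoly, map_sum, Polynomial.eval_finset_sum]
  refine Finset.sum_congr rfl fun r _ => ?_
  rw [Polynomial.derivative_monomial, Polynomial.eval_monomial]

lemma bern_eval_four (r : ℕ) : (Polynomial.bernoulli r).eval (4:ℚ)
    = _root_.bernoulli r + r * ((0:ℚ)^(r-1) + (1:ℚ)^(r-1) + (2:ℚ)^(r-1) + (3:ℚ)^(r-1)) := by
  cases r with
  | zero => simp [Polynomial.bernoulli_zero]
  | succ p =>
    have h := Polynomial.bernoulli_succ_eval 4 p
    rw [show ((4:ℕ):ℚ) = 4 by norm_num] at h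
    rw [h, Finset.sum_range_succ, Finset.sum_range_succ, Finset.sum_range_succ,
      Finset.sum_range_one]
    simp only [Nat.add_sub_cancel]
    push_cast
    norm_num [Nat.succ_eq_add_one]

lemma bern_neg_one_pow (r : ℕ) :
    (-1:ℚ)^r * _root_.bernoulli r = _root_.bernoulli r + (if r = 1 then 1 else 0) := by
  rcases eq_or_ne r 1 with h | h
  · subst h; norm_num [_root_.bernoulli_one]
  · rw [if_neg h, add_zero, ← bernoulli'_eq_bernoulli, bernoulli_eq_bernoulli'_of_ne_one h]

lemma term_eval (r : ℕ) : (-1:ℚ)^r * (Polynomial.bernoulli r).eval 4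
    = _root_.bernoulli r - r*(-1:ℚ)^(r-1) - r*(-2:ℚ)^(r-1) - r*(-3:ℚ)^(r-1) := by
  match r with
  | 0 => simp [Polynomial.bernoulli_zero]
  | 1 =>
    rw [bern_eval_four 1]
    norm_num [_root_.bernoulli_one]
  | (s+2) =>
    rw [bern_eval_four (s+2)]
    have hb := bern_neg_one_pow (s+2)
    rw [if_neg (by omega), add_zero] at hb
    simp only [Nat.add_sub_cancel, show s + 2 - 1 = s + 1 from rfl]
    have h2 : ((-2:ℚ))^(s+1) = (-1:ℚ)^(s+1) * 2^(s+1) := by rw [neg_pow]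
    have h3 : ((-3:ℚ))^(s+1) = (-1:ℚ)^(s+1) * 3^(s+1) := by rw [neg_pow]
    have h0 : ((0:ℚ))^(s+1) = 0 := zero_pow (Nat.succ_ne_zero s)
    rw [h2, h3, h0, one_pow]
    push_cast
    linear_combination hb

lemma MB_comp_reflect (n : ℕ) :
    MB ((gpoly n).comp (Polynomial.C (-4) - Polynomial.X))
      = ∑ r ∈ Finset.range (n+1),
          (gcoef n r : ℚ) * ((-1:ℚ)^r * (Polynomial.bernoulli r).eval 4) := by
  rw [gpoly, Polynomial.sum_comp, map_sum]
  refine Finset.sum_congr rfl fun r _ => ?_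
  rw [Polynomial.monomial_comp]
  have e : (Polynomial.C (-4) - Polynomial.X : ℚ[X])
      = Polynomial.C (-1) * (Polynomial.X + Polynomial.C 4) := by
    rw [mul_add, ← Polynomial.C_mul]
    norm_num
    ring
  rw [e, mul_pow, ← Polynomial.C_pow, ← mul_assoc, ← Polynomial.C_mul, MB_C_mul,
    MB_X_add_C_pow]
  ring

lemma key_identity (n : ℕ) : (-1:ℚ)^n * MB (gpoly n)
    = MB (gpoly n) - ((gpoly n).derivative.eval (-1) + (gpoly n).derivative.eval (-2)
        + (gpoly n).derivative.eval (-3)) := by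
  have h := congrArg MB (gpoly_reflect n)
  have e : ((-1:ℚ[X])^n * gpoly n) = Polynomial.C ((-1:ℚ)^n) * gpoly n := by
    rw [map_pow, map_neg, map_one]
  rw [e, MB_C_mul, MB_comp_reflect, MB_gpoly] at h
  rw [MB_gpoly, deriv_gpoly_eval, deriv_gpoly_eval, deriv_gpoly_eval, ← h]
  rw [← Finset.sum_add_distrib, ← Finset.sum_add_distrib, ← Finset.sum_sub_distrib]
  refine Finset.sum_congr rfl fun r _ => ?_
  linear_combination (gcoef n r : ℚ) * term_eval r

lemma choose_id (n r : ℕ) (hn : 1 ≤ n) :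
    (n + r) * gcoef n r = 2 * n * ((n + r).choose (2 * r)) := by
  rcases le_or_gt r n with h | h
  · obtain ⟨m, hm⟩ : ∃ m, n + r = m + 1 := ⟨n + r - 1, by omega⟩
    unfold gcoef
    rw [hm]
    simp only [Nat.add_sub_cancel]
    have k1 : (m+1) * m.choose (2*r) = (m+1).choose (2*r+1) * (2*r+1) :=
      Nat.add_one_mul_choose_eq m (2*r)
    have k2 : (m+1).choose (2*r+1) * (2*r+1) = (m+1).choose (2*r) * (m+1 - 2*r) :=
      Nat.choose_succ_right_eq (m+1) (2*r)
    have hk := k1.trans k2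
    have h2r : 2*r ≤ m + 1 := by omega
    zify [h2r] at hk
    zify
    have hmz : (n:ℤ) + r = m + 1 := by exact_mod_cast congrArg (Nat.cast : ℕ → ℤ) hm
    linear_combination hk - 2*((m+1).choose (2*r) : ℤ) * hmz
  · unfold gcoef
    rw [Nat.choose_eq_zero_of_lt (by omega), Nat.choose_eq_zero_of_lt (by omega)]
    simp

lemma MB_gpoly_eq (n : ℕ) (hn : 1 ≤ n) : MB (gpoly n) = 2 * n * zagierBstar n := by
  rw [MB_gpoly, zagierBstar, Finset.mul_sum]
  refine Finset.sum_congr rfl fun r _ => ?_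
  have hne : ((n:ℚ) + r) ≠ 0 := by positivity
  have hq : ((n:ℚ) + r) * (gcoef n r : ℚ) = 2 * n * ((n+r).choose (2*r) : ℚ) := by
    exact_mod_cast choose_id n r hn
  field_simp
  linear_combination _root_.bernoulli r * hq

lemma eval_rec (n : ℕ) (x : ℚ) :
    (gpoly (n+2)).eval x = (2 + x) * (gpoly (n+1)).eval x - (gpoly n).eval x := by
  rw [gpoly_rec n]
  simp only [Polynomial.eval_sub, Polynomial.eval_mul, Polynomial.eval_add, Polynomial.eval_C,
    Polynomial.eval_X]

lemma deriv_rec (n : ℕ) (x : ℚ) :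
    (gpoly (n+2)).derivative.eval x
      = (gpoly (n+1)).eval x + (2 + x) * (gpoly (n+1)).derivative.eval x
        - (gpoly n).derivative.eval x := by
  rw [gpoly_rec n, Polynomial.derivative_sub, Polynomial.derivative_mul,
    Polynomial.derivative_add, Polynomial.derivative_C, Polynomial.derivative_X]
  simp only [Polynomial.eval_sub, Polynomial.eval_mul, Polynomial.eval_add, Polynomial.eval_C,
    Polynomial.eval_X, Polynomial.eval_zero, zero_add, one_mul]

def e1t : ℕ → ℚ
  | 0 => 2 | 1 => 1 | 2 => -1 | 3 => -2 | 4 => -1 | 5 => 1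
  | 6 => 2 | 7 => 1 | 8 => -1 | 9 => -2 | 10 => -1 | _ => 1

def w1t : ℕ → ℚ
  | 0 => 0 | 1 => 1 | 2 => 1 | 3 => 0 | 4 => -1 | 5 => -1
  | 6 => 0 | 7 => 1 | 8 => 1 | 9 => 0 | 10 => -1 | _ => -1

def e2t : ℕ → ℚ
  | 0 => 2 | 1 => 0 | 2 => -2 | 3 => 0 | 4 => 2 | 5 => 0
  | 6 => -2 | 7 => 0 | 8 => 2 | 9 => 0 | 10 => -2 | _ => 0

def w2t : ℕ → ℚ
  | 0 => 0 | 1 => 1 | 2 => 0 | 3 => -1 | 4 => 0 | 5 => 1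
  | 6 => 0 | 7 => -1 | 8 => 0 | 9 => 1 | 10 => 0 | _ => -1

def e3t : ℕ → ℚ
  | 0 => 2 | 1 => -1 | 2 => -1 | 3 => 2 | 4 => -1 | 5 => -1
  | 6 => 2 | 7 => -1 | 8 => -1 | 9 => 2 | 10 => -1 | _ => -1

def w3t : ℕ → ℚ
  | 0 => 0 | 1 => 1 | 2 => -1 | 3 => 0 | 4 => 1 | 5 => -1
  | 6 => 0 | 7 => 1 | 8 => -1 | 9 => 0 | 10 => 1 | _ => -1

def Ptab (n : ℕ) : Prop :=
  (gpoly n).eval (-1) = e1t (n % 12) ∧ (gpoly n).derivative.eval (-1) = n * w1t (n % 12) ∧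
  (gpoly n).eval (-2) = e2t (n % 12) ∧ (gpoly n).derivative.eval (-2) = n * w2t (n % 12) ∧
  (gpoly n).eval (-3) = e3t (n % 12) ∧ (gpoly n).derivative.eval (-3) = n * w3t (n % 12)

lemma ptab_all : ∀ n : ℕ, Ptab n ∧ Ptab (n + 1) := by
  intro n
  induction n with
  | zero =>
    constructor
    · unfold Ptab
      rw [gpoly_zero]
      norm_num [e1t, w1t, e2t, w2t, e3t, w3t]
    · unfold Ptab
      rw [gpoly_one]
      simp only [Polynomial.derivative_add, Polynomial.derivative_C, Polynomial.derivative_X]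
      norm_num [e1t, w1t, e2t, w2t, e3t, w3t]
  | succ k ih =>
    refine ⟨ih.2, ?_⟩
    show Ptab (k + 2)
    obtain ⟨p1, p2, p3, p4, p5, p6⟩ := ih.1
    obtain ⟨q1, q2, q3, q4, q5, q6⟩ := ih.2
    unfold Ptab
    rw [eval_rec k (-1), eval_rec k (-2), eval_rec k (-3), deriv_rec k (-1), deriv_rec k (-2),
      deriv_rec k (-3), p1, p2, p3, p4, p5, p6, q1, q2, q3, q4, q5, q6]
    obtain ⟨c, hc12, hcc⟩ : ∃ c, c < 12 ∧ k % 12 = c := ⟨k % 12, by omega, rfl⟩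
    have m1 : (k + 1) % 12 = (c + 1) % 12 := by omega
    have m2 : (k + 2) % 12 = (c + 2) % 12 := by omega
    rw [hcc, m1, m2]
    push_cast
    interval_cases c <;> refine ⟨?_, ?_, ?_, ?_, ?_, ?_⟩ <;>
      norm_num [e1t, w1t, e2t, w2t, e3t, w3t] <;> ring

theorem zagierBstar_odd_periodic (n : ℕ) :
    zagierBstar (2 * n + 1) =
      ![(3 : ℚ)/4, -1/4, -1/4, 1/4, 1/4, -3/4] ⟨n % 6, Nat.mod_lt _ (by norm_num)⟩ := by
  set N := 2 * n + 1 with hN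
  have hkey := key_identity N
  have hodd : ((-1:ℚ))^N = -1 := Odd.neg_one_pow ⟨n, by omega⟩
  have hMB := MB_gpoly_eq N (by omega)
  obtain ⟨P, _⟩ := ptab_all N
  obtain ⟨_, d1, _, d2, _, d3⟩ := P
  rw [hodd, hMB, d1, d2, d3] at hkey
  have hNq : ((N:ℕ):ℚ) ≠ 0 := Nat.cast_ne_zero.mpr (by omega)
  have hB : zagierBstar N = (w1t (N % 12) + w2t (N % 12) + w3t (N % 12)) / 4 := by
    have h4 : (N:ℚ) * (4 * zagierBstar N)
        = (N:ℚ) * (w1t (N % 12) + w2t (N % 12) + w3t (N % 12)) := by linear_combination -hkey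
    have h5 := mul_left_cancel₀ hNq h4
    linarith
  obtain ⟨c, hc, hcc⟩ : ∃ c, c < 6 ∧ n % 6 = c := ⟨_, Nat.mod_lt _ (by norm_num), rfl⟩
  have hm : N % 12 = (2 * c + 1) % 12 := by omega
  rw [hB, hm]
  simp only [hcc]
  interval_cases c <;> norm_num [w1t, w2t, w3t]
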